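/- Let K be a totally real number field of degree n with real embeddings σ_1, …, σ_n, let α ∈ K be totally positive, and let I = g·O_K be a nonzero principal ideal of O_K (g ∈ O_K, g ≠ 0). Then the set { ∏_{i=1}^{n} √(σ_i(α)) · |σ_i(y)| : y ∈ I, y ≠ 0 } has a least element, equal to √(N_{K/ℚ}(α)) · |N_{K/ℚ}(g)|, and moreover |N_{K/ℚ}(g)| = N(I), the absolute norm of the ideal I. -/

import Mathlib

open NumberField

lemma sqrt_prod' {ι : Type*} {s : Finset ι} {f : ι → ℝ} (h : ∀ i ∈ s, 0 ≤ f i) :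
    Real.sqrt (∏ i ∈ s, f i) = ∏ i ∈ s, Real.sqrt (f i) := by
  induction s using Finset.cons_induction with
  | empty => simp
  | cons a s ha ih =>
    rw [Finset.prod_cons, Finset.prod_cons, Real.sqrt_mul (h a (Finset.mem_cons_self a s)),
      ih (fun i hi => h i (Finset.mem_cons_of_mem hi))]

/-- If the real embeddings of `K` indexed by `Fin n` (with `n = finrank ℚ K`) are in
bijection, then the norm of any element is the product of its real embeddings. -/
lemma norm_eq_prod_real_embeddings
    (K : Type*) [Field K] [NumberField K] (n : ℕ)
    (hn : Module.finrank ℚ K = n)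
    (σ : Fin n → (K →+* ℝ)) (hσ : Function.Bijective σ) (x : K) :
    ((Algebra.norm ℚ x : ℚ) : ℝ) = ∏ i, σ i x := by
  set f : Fin n → (K →+* ℂ) := fun i => Complex.ofRealHom.comp (σ i) with hf
  have hinj : Function.Injective f := by
    intro i j h
    apply hσ.injective
    ext a
    have := RingHom.congr_fun h a
    simpa [hf, Complex.ofReal_inj] using this
  have hcard : Fintype.card (Fin n) = Fintype.card (K →+* ℂ) := by
    rw [Fintype.card_fin, NumberField.Embeddings.card K ℂ, hn]
  have hbij : Function.Bijective f :=
    (Fintype.bijective_iff_injective_and_card f).2 ⟨hinj, hcard⟩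
  have key : ((Algebra.norm ℚ x : ℚ) : ℂ) = ∏ i, ((σ i x : ℝ) : ℂ) := by
    have h1 := Algebra.norm_eq_prod_embeddings ℚ ℂ (x := x)
    have h2 : ∏ ψ : K →+* ℂ, ψ x = ∏ φ : K →ₐ[ℚ] ℂ, φ x :=
      Fintype.prod_equiv (RingHom.equivRatAlgHom K ℂ) (fun ψ => ψ x) (fun φ => φ x)
        (fun ψ => by simp [RingHom.equivRatAlgHom_apply])
    have h3 : ∏ ψ : K →+* ℂ, ψ x = ∏ i, f i x :=
      (Fintype.prod_bijective f hbij _ _ (fun i => rfl)).symm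
    have : algebraMap ℚ ℂ (Algebra.norm ℚ x) = ∏ i, f i x := by
      rw [h1, ← h2, h3]
    simpa [hf, eq_ratCast] using this
  have := key
  rw [show ∏ i, ((σ i x : ℝ) : ℂ) = ((∏ i, σ i x : ℝ) : ℂ) by push_cast; rfl] at this
  exact_mod_cast this

/-- For a totally real number field `K` of degree `n` with real
embeddings `σ₁, …, σₙ`, a totally positive `α ∈ K`, and a nonzero principal ideal
`I = g·𝓞 K`, the set `{ ∏ᵢ √(σᵢ α) · |σᵢ y| : y ∈ I, y ≠ 0 }` has a least element
equal to `√(N_{K/ℚ} α) · |N_{K/ℚ} g|`, and `|N_{K/ℚ} g| = N(I)`. -/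
theorem minProductDistance_of_principal_ideal
    (K : Type*) [Field K] [NumberField K] (n : ℕ)
    (hn : Module.finrank ℚ K = n)
    (σ : Fin n → (K →+* ℝ)) (hσ : Function.Bijective σ)
    (α : K) (hα : ∀ i, 0 < σ i α)
    (g : 𝓞 K) (hg : g ≠ 0) :
    IsLeast { x : ℝ | ∃ y ∈ Ideal.span ({g} : Set (𝓞 K)), y ≠ 0 ∧
        x = ∏ i, Real.sqrt (σ i α) * |σ i (algebraMap (𝓞 K) K y)| }
      (Real.sqrt (Algebra.norm ℚ α) * |(Algebra.norm ℚ (algebraMap (𝓞 K) K g) : ℝ)|) ∧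
    |Algebra.norm ℚ (algebraMap (𝓞 K) K g)| =
      (Ideal.absNorm (Ideal.span ({g} : Set (𝓞 K))) : ℚ) := by
  have hnorm := norm_eq_prod_real_embeddings K n hn σ hσ
  -- the value of the function at any nonzero y
  have hval : ∀ y : 𝓞 K, ∏ i, Real.sqrt (σ i α) * |σ i (algebraMap (𝓞 K) K y)|
      = Real.sqrt (Algebra.norm ℚ α) * |((Algebra.norm ℚ (algebraMap (𝓞 K) K y) : ℚ) : ℝ)| := by
    intro y
    rw [Finset.prod_mul_distrib]
    congr 1
    · rw [hnorm α]
      exact (sqrt_prod' (fun i _ => (hα i).le)).symm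
    · rw [hnorm, Finset.abs_prod]
  constructor
  · constructor
    · refine ⟨g, Ideal.mem_span_singleton_self g, hg, ?_⟩
      rw [hval g]
    · rintro x ⟨y, hy, hy0, rfl⟩
      rw [hval y]
      obtain ⟨z, hz⟩ := Ideal.mem_span_singleton'.mp hy
      have hz0 : z ≠ 0 := by rintro rfl; simp at hz; exact hy0 hz.symm
      have hy' : (algebraMap (𝓞 K) K y) = (algebraMap (𝓞 K) K z) * (algebraMap (𝓞 K) K g) := by
        rw [← hz]; push_cast; ring
      rw [hy', map_mul, Rat.cast_mul, abs_mul]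
      have h1 : (1 : ℝ) ≤ |((Algebra.norm ℚ (algebraMap (𝓞 K) K z) : ℚ) : ℝ)| := by
        rw [← Algebra.coe_norm_int]
        exact_mod_cast Int.one_le_abs (Algebra.norm_ne_zero_iff.mpr hz0)
      have hge0 : (0 : ℝ) ≤ Real.sqrt (Algebra.norm ℚ α) := Real.sqrt_nonneg _
      calc Real.sqrt (Algebra.norm ℚ α) * |((Algebra.norm ℚ (algebraMap (𝓞 K) K g) : ℚ) : ℝ)|
          = Real.sqrt (Algebra.norm ℚ α) *
            (1 * |((Algebra.norm ℚ (algebraMap (𝓞 K) K g) : ℚ) : ℝ)|) := by ring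
        _ ≤ Real.sqrt (Algebra.norm ℚ α) *
            (|((Algebra.norm ℚ (algebraMap (𝓞 K) K z) : ℚ) : ℝ)| *
              |((Algebra.norm ℚ (algebraMap (𝓞 K) K g) : ℚ) : ℝ)|) := by
            apply mul_le_mul_of_nonneg_left _ hge0
            exact mul_le_mul_of_nonneg_right h1 (abs_nonneg _)
  · rw [Ideal.absNorm_span_singleton, ← Algebra.coe_norm_int]
    push_cast [Nat.cast_natAbs]
    norm_cast
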